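/- Let u : ℝ → E be a function of bounded variation with values in a normed space E, and τ > 0. Then ∫_ℝ ‖u(t+τ) − u(t)‖ dt ≤ τ · TV(u), where TV(u) is the total variation of u. -/

import Mathlib

noncomputable section

open MeasureTheory

/-- Superadditivity of the lower Lebesgue integral over finite sums,
valid without any measurability assumptions. -/
lemma sum_lintegral_le_lintegral_sum {α ι : Type*} [MeasurableSpace α] (μ : Measure α)
    (s : Finset ι) (f : ι → α → ENNReal) :
    ∑ i ∈ s, ∫⁻ t, f i t ∂μ ≤ ∫⁻ t, ∑ i ∈ s, f i t ∂μ := by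
  classical
  induction s using Finset.induction with
  | empty => simp
  | insert _ _ h ih =>
    rename_i a s
    rw [Finset.sum_insert h]
    calc (∫⁻ t, f a t ∂μ) + ∑ i ∈ s, ∫⁻ t, f i t ∂μ
        ≤ (∫⁻ t, f a t ∂μ) + ∫⁻ t, ∑ i ∈ s, f i t ∂μ := by gcongr
      _ ≤ ∫⁻ t, (f a t + ∑ i ∈ s, f i t) ∂μ := le_lintegral_add _ _
      _ = ∫⁻ t, ∑ i ∈ insert a s, f i t ∂μ := by
          simp [Finset.sum_insert h]

theorem stmt_11 {E : Type*} [NormedAddCommGroup E] (u : ℝ → E) (τ : ℝ) (hτ : 0 < τ)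
    (hBV : BoundedVariationOn u Set.univ) :
    ∫⁻ t, (‖u (t + τ) - u t‖₊ : ENNReal) ∂volume ≤
      ENNReal.ofReal τ * eVariationOn u Set.univ := by
  classical
  set g : ℝ → ENNReal := fun t => (‖u (t + τ) - u t‖₊ : ENNReal) with hg
  -- ℝ is covered by the intervals [kτ, (k+1)τ), k ∈ ℤ
  have hcover : (⋃ k : ℤ, Set.Ico ((k : ℝ) * τ) (((k : ℝ) + 1) * τ)) = Set.univ := by
    ext t
    simp only [Set.mem_iUnion, Set.mem_Ico, Set.mem_univ, iff_true]
    refine ⟨⌊t / τ⌋, ?_, ?_⟩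
    · rw [← le_div_iff₀ hτ]
      exact Int.floor_le _
    · rw [← div_lt_iff₀ hτ]
      exact Int.lt_floor_add_one _
  -- translation: the piece over [kτ,(k+1)τ) equals an integral over [0,τ)
  have htrans : ∀ k : ℤ,
      (∫⁻ t in Set.Ico ((k : ℝ) * τ) (((k : ℝ) + 1) * τ), g t) =
      ∫⁻ t in Set.Ico (0 : ℝ) τ, g (t + (k : ℝ) * τ) := by
    intro k
    have e : (volume : Measure ℝ).restrict (Set.Ico ((k : ℝ) * τ) (((k : ℝ) + 1) * τ)) =
        Measure.map (· + (k : ℝ) * τ) ((volume : Measure ℝ).restrict (Set.Ico (0 : ℝ) τ)) := by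
      rw [← map_add_right_eq_self (volume : Measure ℝ) ((k : ℝ) * τ),
        Measure.restrict_map (measurable_add_const _) measurableSet_Ico]
      have hset : (· + (k : ℝ) * τ) ⁻¹' Set.Ico ((k : ℝ) * τ) (((k : ℝ) + 1) * τ) =
          Set.Ico (0 : ℝ) τ := by
        ext x
        simp only [Set.mem_preimage, Set.mem_Ico]
        constructor
        · rintro ⟨h1, h2⟩
          exact ⟨by linarith, by nlinarith⟩
        · rintro ⟨h1, h2⟩
          exact ⟨by linarith, by nlinarith⟩
      rw [hset, map_add_right_eq_self (volume : Measure ℝ) ((k : ℝ) * τ)]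
    have hco : (fun x : ℝ => x + (k : ℝ) * τ) = ⇑(MeasurableEquiv.addRight ((k : ℝ) * τ)) := rfl
    rw [e, hco, (MeasurableEquiv.addRight ((k : ℝ) * τ)).measurableEmbedding.lintegral_map]
    rfl
  -- pointwise bound on finite sums
  have hpt : ∀ (t : ℝ) (s : Finset ℤ),
      ∑ k ∈ s, g (t + (k : ℝ) * τ) ≤ eVariationOn u Set.univ := by
    intro t s
    set N : ℕ := s.sup fun k => k.natAbs with hN
    have hsub : s ⊆ Finset.Icc (-(N : ℤ)) (N : ℤ) := by
      intro k hk
      have : k.natAbs ≤ N := Finset.le_sup (f := fun k : ℤ => k.natAbs) hk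
      simp only [Finset.mem_Icc]
      omega
    have h1 : ∑ k ∈ s, g (t + (k : ℝ) * τ) ≤
        ∑ k ∈ Finset.Icc (-(N : ℤ)) (N : ℤ), g (t + (k : ℝ) * τ) :=
      Finset.sum_le_sum_of_subset hsub
    refine h1.trans ?_
    -- reindex by i ∈ range (2N+1), k = i - N
    have hmap : (Finset.range (2 * N + 1)).map
        ⟨fun i : ℕ => (i : ℤ) - N, fun a b h => by simp only [] at h; omega⟩ =
        Finset.Icc (-(N : ℤ)) (N : ℤ) := by
      ext k
      simp only [Finset.mem_map, Finset.mem_range, Finset.mem_Icc, Function.Embedding.coeFn_mk]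
      constructor
      · rintro ⟨i, hi, rfl⟩; change -(N:ℤ) ≤ (i:ℤ) - N ∧ (i:ℤ) - N ≤ N; omega
      · rintro ⟨h1, h2⟩; exact ⟨(k + N).toNat, by omega, by change ((k + N).toNat : ℤ) - N = k; omega⟩
    rw [← hmap, Finset.sum_map]
    set v : ℕ → ℝ := fun i => t + ((i : ℝ) - (N : ℝ)) * τ with hv
    have hmono : Monotone v := by
      intro a b hab
      simp only [hv]
      have : (a : ℝ) ≤ (b : ℝ) := by exact_mod_cast hab
      nlinarith
    have key := eVariationOn.sum_le (f := u) (n := 2 * N + 1) hmono (fun i => Set.mem_univ (v i))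
    refine le_trans (le_of_eq ?_) key
    apply Finset.sum_congr rfl
    intro i _
    change g (t + (((i : ℤ) - N : ℤ) : ℝ) * τ) = _
    simp only [Function.Embedding.coeFn_mk, hv, hg]
    rw [edist_nndist, nndist_eq_nnnorm]
    congr 3 <;> push_cast <;> ring
  -- put everything together
  calc ∫⁻ t, g t ∂volume
      = ∫⁻ t in ⋃ k : ℤ, Set.Ico ((k : ℝ) * τ) (((k : ℝ) + 1) * τ), g t := by
        rw [hcover, Measure.restrict_univ]
    _ ≤ ∑' k : ℤ, ∫⁻ t in Set.Ico ((k : ℝ) * τ) (((k : ℝ) + 1) * τ), g t :=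
        lintegral_iUnion_le _ _
    _ = ∑' k : ℤ, ∫⁻ t in Set.Ico (0 : ℝ) τ, g (t + (k : ℝ) * τ) := by
        exact tsum_congr htrans
    _ = ⨆ s : Finset ℤ, ∑ k ∈ s, ∫⁻ t in Set.Ico (0 : ℝ) τ, g (t + (k : ℝ) * τ) :=
        ENNReal.tsum_eq_iSup_sum
    _ ≤ ENNReal.ofReal τ * eVariationOn u Set.univ := by
        refine iSup_le fun s => ?_
        calc ∑ k ∈ s, ∫⁻ t in Set.Ico (0 : ℝ) τ, g (t + (k : ℝ) * τ)
            ≤ ∫⁻ t in Set.Ico (0 : ℝ) τ, ∑ k ∈ s, g (t + (k : ℝ) * τ) :=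
              sum_lintegral_le_lintegral_sum _ s _
          _ ≤ ∫⁻ _ in Set.Ico (0 : ℝ) τ, eVariationOn u Set.univ := by
              exact lintegral_mono fun t => hpt t s
          _ = ENNReal.ofReal τ * eVariationOn u Set.univ := by
              rw [setLIntegral_const, Real.volume_Ico, mul_comm]
              simp
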